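/- Suppose x ∈ K, m ≥ 1, c₁, …, c_m ∈ k, and n₁ < n₂ < … < n_m are positive integers each coprime to p, such that xᵖ − x = Σᵢ cᵢ·u^{−nᵢ} in K. Then cᵢ = 0 for all i. Consequently, the classes of u^{−n} for positive integers n coprime to p are 𝔽_p-linearly independent in K/℘(K) where ℘(x) = xᵖ − x, so Hom_cont(Gal(K^sep/K), 𝔽_p) is infinite. (This shows the unrestricted deformation functor of a G_{K_∞}-representation has infinite-dimensional tangent space.) -/

import Mathlib

/-- Artin–Schreier independence: if `xᵖ − x = Σᵢ cᵢ u^{−nᵢ}` in `k((u))` with the `nᵢ`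
positive, strictly increasing, and coprime to `p`, then all `cᵢ = 0`. -/
theorem stmt6 (p : ℕ) (hp : p.Prime) (k : Type*) [Field k] [CharP k p]
    (x : LaurentSeries k) (m : ℕ) (hm : 1 ≤ m)
    (c : Fin m → k) (nn : Fin m → ℕ)
    (hpos : ∀ i, 0 < nn i) (hcop : ∀ i, ¬ p ∣ nn i)
    (hmono : StrictMono nn)
    (heq : x ^ p - x = ∑ i : Fin m, HahnSeries.single (-(nn i : ℤ)) (c i)) :
    ∀ i, c i = 0 := by
  classical
  by_contra hcon
  push_neg at hcon
  set y : LaurentSeries k := x ^ p - x with hy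
  -- coefficient of y at -(nn i) is c i
  have hcoeff : ∀ d : ℤ, y.coeff d =
      ∑ i : Fin m, (HahnSeries.single (-(nn i : ℤ)) (c i)).coeff d := by
    intro d
    rw [heq]
    exact map_sum (HahnSeries.coeff.addMonoidHom d) _ _
  have hcoeff' : ∀ i : Fin m, y.coeff (-(nn i : ℤ)) = c i := by
    intro i
    rw [hcoeff]
    rw [Finset.sum_eq_single i]
    · exact HahnSeries.coeff_single_same _ _
    · intro j _ hj
      apply HahnSeries.coeff_single_of_ne
      simp only [neg_inj, Int.natCast_inj, ne_eq]
      exact fun h => hj (hmono.injective h).symm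
    · simp
  -- j : maximal index with c j ≠ 0
  obtain ⟨i₀, hi₀⟩ := hcon
  set s : Finset (Fin m) := Finset.univ.filter (fun i => c i ≠ 0) with hs
  have hne : s.Nonempty := ⟨i₀, by simp [hs, hi₀]⟩
  set j : Fin m := s.max' hne with hj
  have hcj : c j ≠ 0 := by
    have := s.max'_mem hne
    simp only [hs, Finset.mem_filter] at this
    exact this.2
  have hmax : ∀ i : Fin m, c i ≠ 0 → i ≤ j := fun i hi =>
    s.le_max' i (by simp [hs, hi])
  -- y.coeff d = 0 for d < -(nn j)
  have hlow : ∀ d : ℤ, d < -(nn j : ℤ) → y.coeff d = 0 := by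
    intro d hd
    rw [hcoeff]
    apply Finset.sum_eq_zero
    intro i _
    rcases eq_or_ne d (-(nn i : ℤ)) with h | h
    · rcases eq_or_ne (c i) 0 with h0 | h0
      · simp [h0]
      · exfalso
        have hij : i ≤ j := hmax i h0
        have : (nn i : ℤ) ≤ (nn j : ℤ) := by
          exact_mod_cast hmono.monotone hij
        omega
    · exact HahnSeries.coeff_single_of_ne h
  have hyne : y ≠ 0 := by
    intro h
    apply hcj
    rw [← hcoeff' j, h, HahnSeries.coeff_zero]
  -- order of y is -(nn j)
  have horder : y.order = -(nn j : ℤ) := by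
    apply le_antisymm
    · exact HahnSeries.order_le_of_coeff_ne_zero (by rw [hcoeff' j]; exact_mod_cast hcj)
    · by_contra h
      push_neg at h
      exact (HahnSeries.coeff_order_eq_zero.not.2 hyne) (hlow _ h)
  have hxne : x ≠ 0 := by
    intro h
    apply hyne
    rw [hy, h, zero_pow hp.ne_zero, sub_zero]
  have hp2 : 2 ≤ p := hp.two_le
  rcases lt_or_ge x.order 0 with hv | hv
  · -- pole case: order y = p * x.order, divisible by p
    have hpow : (x ^ p).order = (p : ℤ) * x.order := by
      rw [HahnSeries.order_pow]
      simp [nsmul_eq_mul]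
    have hlt : (p : ℤ) * x.order < x.order := by
      nlinarith [hv, (by exact_mod_cast hp2 : (2:ℤ) ≤ (p:ℤ))]
    have hyc : y.coeff ((p : ℤ) * x.order) ≠ 0 := by
      rw [hy, HahnSeries.coeff_sub,
        HahnSeries.coeff_eq_zero_of_lt_order hlt, sub_zero, ← hpow]
      exact HahnSeries.coeff_order_eq_zero.not.2 (pow_ne_zero p hxne)
    have hylow : ∀ d : ℤ, d < (p : ℤ) * x.order → y.coeff d = 0 := by
      intro d hd
      rw [hy, HahnSeries.coeff_sub,
        HahnSeries.coeff_eq_zero_of_lt_order (hd.trans hlt),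
        HahnSeries.coeff_eq_zero_of_lt_order (by rw [hpow]; exact hd), sub_zero]
    have horder2 : y.order = (p : ℤ) * x.order := by
      apply le_antisymm
      · exact HahnSeries.order_le_of_coeff_ne_zero hyc
      · by_contra h
        push_neg at h
        exact (HahnSeries.coeff_order_eq_zero.not.2 hyne) (hylow _ h)
    have hdvd : (p : ℤ) ∣ (nn j : ℤ) := by
      refine ⟨-x.order, ?_⟩
      have h3 : -(nn j : ℤ) = (p : ℤ) * x.order := horder ▸ horder2
      rw [mul_neg]
      omega
    exact hcop j (by exact_mod_cast hdvd)
  · -- no pole: all negative coefficients vanish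
    apply hcj
    rw [← hcoeff' j, hy, HahnSeries.coeff_sub]
    have h1 : x.coeff (-(nn j : ℤ)) = 0 := by
      apply HahnSeries.coeff_eq_zero_of_lt_order
      have := hpos j
      omega
    have h2 : (x ^ p).coeff (-(nn j : ℤ)) = 0 := by
      apply HahnSeries.coeff_eq_zero_of_lt_order
      rw [HahnSeries.order_pow]
      have hps : (p : ℤ) • x.order = (p : ℤ) * x.order := by simp
      have : (0:ℤ) ≤ (p : ℤ) * x.order := mul_nonneg (by positivity) hv
      have hn := hpos j
      simp only [nsmul_eq_mul]
      omega
    rw [h1, h2, sub_zero]
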